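/- (Gradient-flow solutions solve a Hamiltonian system.) Let G be a symmetric positive-definite real n×n matrix, let E : ℝⁿ → ℝ be twice continuously differentiable, and let q : I → ℝⁿ be a differentiable curve on an open interval I satisfying the gradient-flow equation G q̇(t) = −∇E(q(t)) for all t ∈ I. Then q is twice differentiable on I and satisfies the second-order (Hamiltonian / Euler–Lagrange) equation G q̈(t) = D²E(q(t)) G⁻¹ ∇E(q(t)) for all t ∈ I, where D²E denotes the Hessian of E. -/

import Mathlib

open scoped Topology

/-- **Gradient-flow solutions solve a Hamiltonian system.**
Let `G` be a symmetric positive-definite real `n×n` matrix, `E : ℝⁿ → ℝ` be `C²`, and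
let `q` be differentiable on an open interval `I` with `G q̇ = -∇E(q)` on `I`. Then `q`
is twice differentiable on `I` and `G q̈ = D²E(q) G⁻¹ ∇E(q)` on `I`, where the Hessian
`D²E(x)` is realized as the derivative of the gradient map, `fderiv ℝ (gradient E) x`. -/
theorem statement16 {n : ℕ} (G : Matrix (Fin n) (Fin n) ℝ) (hG : G.PosDef)
    (E : EuclideanSpace ℝ (Fin n) → ℝ) (hE : ContDiff ℝ 2 E)
    (a b : ℝ) (q q' : ℝ → EuclideanSpace ℝ (Fin n))
    (hq : ∀ t ∈ Set.Ioo a b, HasDerivAt q (q' t) t)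
    (hflow : ∀ t ∈ Set.Ioo a b,
      Matrix.toEuclideanLin G (q' t) = -gradient E (q t)) :
    ∃ q'' : ℝ → EuclideanSpace ℝ (Fin n),
      (∀ t ∈ Set.Ioo a b, HasDerivAt q' (q'' t) t) ∧
      ∀ t ∈ Set.Ioo a b,
        Matrix.toEuclideanLin G (q'' t) =
          fderiv ℝ (gradient E) (q t)
            (Matrix.toEuclideanLin G⁻¹ (gradient E (q t))) := by
  have hdet : IsUnit G.det := (Matrix.isUnit_iff_isUnit_det G).1 hG.isUnit
  -- G ∘ G⁻¹ = id and G⁻¹ ∘ G = id at the level of toEuclideanLin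
  have hGG : ∀ x : EuclideanSpace ℝ (Fin n),
      Matrix.toEuclideanLin G (Matrix.toEuclideanLin G⁻¹ x) = x := by
    intro x
    simp only [Matrix.toEuclideanLin_apply, Equiv.apply_symm_apply, Matrix.mulVec_mulVec,
      Matrix.mul_nonsing_inv G hdet, Matrix.one_mulVec, Equiv.symm_apply_apply]
  have hGG' : ∀ x : EuclideanSpace ℝ (Fin n),
      Matrix.toEuclideanLin G⁻¹ (Matrix.toEuclideanLin G x) = x := by
    intro x
    simp only [Matrix.toEuclideanLin_apply, Equiv.apply_symm_apply, Matrix.mulVec_mulVec,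
      Matrix.nonsing_inv_mul G hdet, Matrix.one_mulVec, Equiv.symm_apply_apply]
  -- gradient E is C¹
  have hgrad : ContDiff ℝ 1 (gradient E) := by
    have h1 : ContDiff ℝ 1 (fderiv ℝ E) := hE.fderiv_right (by norm_num)
    have : gradient E = fun x => (InnerProductSpace.toDual ℝ _).symm (fderiv ℝ E x) := rfl
    rw [this]
    exact (InnerProductSpace.toDual ℝ _).symm.contDiff.comp h1
  -- continuity of toEuclideanLin G⁻¹ as CLM
  let Ginv : EuclideanSpace ℝ (Fin n) →L[ℝ] EuclideanSpace ℝ (Fin n) :=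
    LinearMap.toContinuousLinearMap (Matrix.toEuclideanLin G⁻¹)
  refine ⟨fun t => -(Ginv (fderiv ℝ (gradient E) (q t) (q' t))), ?_, ?_⟩
  · intro t ht
    have hq't : ∀ s ∈ Set.Ioo a b, q' s = -(Ginv (gradient E (q s))) := by
      intro s hs
      have := congrArg (Matrix.toEuclideanLin G⁻¹) (hflow s hs)
      rw [hGG' (q' s), map_neg] at this
      simpa [Ginv] using this
    have hdg : HasDerivAt (fun s => gradient E (q s))
        (fderiv ℝ (gradient E) (q t) (q' t)) t :=
      ((hgrad.differentiable one_ne_zero (q t)).hasFDerivAt).comp_hasDerivAt t (hq t ht)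
    have : HasDerivAt (fun s => -(Ginv (gradient E (q s))))
        (-(Ginv (fderiv ℝ (gradient E) (q t) (q' t)))) t :=
      (Ginv.hasFDerivAt.comp_hasDerivAt t hdg).neg
    refine this.congr_of_eventuallyEq ?_
    filter_upwards [Ioo_mem_nhds ht.1 ht.2] with s hs
    exact hq't s hs
  · intro t ht
    have hq't : q' t = -(Matrix.toEuclideanLin G⁻¹ (gradient E (q t))) := by
      have := congrArg (Matrix.toEuclideanLin G⁻¹) (hflow t ht)
      rwa [hGG' (q' t), map_neg] at this
    have : (fderiv ℝ (gradient E) (q t)) (q' t)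
        = -(fderiv ℝ (gradient E) (q t)) (Matrix.toEuclideanLin G⁻¹ (gradient E (q t))) := by
      rw [hq't, map_neg]
    have hGinv : ∀ x, Ginv x = Matrix.toEuclideanLin G⁻¹ x := fun _ => rfl
    rw [map_neg, this, hGinv, map_neg, map_neg, hGG, neg_neg]
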